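/- A group of orientation-preserving homeomorphisms of the real line (or of (0,1)) acting freely is left-orderable with an Archimedean order, and hence is isomorphic to a subgroup of (ℝ, +); in particular it is abelian. -/
import Mathlib

set_option linter.unusedSectionVars false

namespace Holder7

variable {G : Subgroup (Equiv.Perm ℝ)}

/-- Application of a subgroup element to a real. -/
def ap (g : G) (x : ℝ) : ℝ := (g : Equiv.Perm ℝ) x

lemma ap_one (x : ℝ) : ap (1 : G) x = x := rfl

lemma ap_mul (g h : G) (x : ℝ) : ap (g * h) x = ap g (ap h x) := rfl

lemma ap_pow_succ (g : G) (n : ℕ) (x : ℝ) : ap (g ^ (n + 1)) x = ap g (ap (g ^ n) x) := by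
  rw [pow_succ']; rfl

lemma ap_inv_self (g : G) (x : ℝ) : ap g (ap g⁻¹ x) = x := by
  simp [ap]

section Basic

variable (hcont : ∀ g ∈ G, Continuous (⇑g))
  (horient : ∀ g ∈ G, Monotone (⇑g))
  (hfree : ∀ g ∈ G, (∃ x : ℝ, g x = x) → g = 1)

include hcont horient hfree

lemma mono (g : G) : Monotone (ap g) := horient (g : Equiv.Perm ℝ) g.2

lemma strict (g : G) : StrictMono (ap g) :=
  (horient (g : Equiv.Perm ℝ) g.2).strictMono_of_injective (g : Equiv.Perm ℝ).injective

lemma free' (g : G) (x : ℝ) (hx : ap g x = x) : g = 1 := by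
  have h := hfree (g : Equiv.Perm ℝ) g.2 ⟨x, hx⟩
  exact Subtype.ext (by rw [h]; rfl)

lemma trich (g : G) (hg : g ≠ 1) : (∀ x, x < ap g x) ∨ (∀ x, ap g x < x) := by
  by_contra hc
  push_neg at hc
  obtain ⟨⟨a, ha⟩, b, hb⟩ := hc
  have hcF : Continuous fun x => ap g x - x := (hcont (g : Equiv.Perm ℝ) g.2).sub continuous_id
  have h0 : (0 : ℝ) ∈ Set.uIcc (ap g a - a) (ap g b - b) :=
    Set.mem_uIcc.2 (Or.inl ⟨by linarith, by linarith⟩)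
  obtain ⟨c, -, hc⟩ := intermediate_value_uIcc hcF.continuousOn h0
  have hc' : ap g c - c = 0 := hc
  exact hg (free' hcont horient hfree g c (by linarith))

lemma ptwise_le (g h : G) (h0 : ap g 0 ≤ ap h 0) : ∀ x, ap g x ≤ ap h x := by
  rcases eq_or_ne (h⁻¹ * g) 1 with he | hne
  · have : h = g := inv_mul_eq_one.mp he
    subst this; exact fun x => le_rfl
  · rcases trich hcont horient hfree (h⁻¹ * g) hne with hp | hm
    · exfalso
      have h1 := hp 0
      rw [ap_mul] at h1
      have h2 : ap h⁻¹ (ap g 0) ≤ ap h⁻¹ (ap h 0) := mono hcont horient hfree h⁻¹ h0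
      have h3 : ap h⁻¹ (ap h 0) = 0 := by
        have := ap_inv_self h⁻¹ 0; rwa [inv_inv] at this
      linarith
    · intro x
      have h1 := hm x
      rw [ap_mul] at h1
      have h2 := strict hcont horient hfree h h1
      rw [ap_inv_self] at h2
      exact h2.le

lemma ptwise_lt (g h : G) (h0 : ap g 0 < ap h 0) : ∀ x, ap g x < ap h x := by
  have hne : h⁻¹ * g ≠ 1 := by
    intro he
    have : h = g := inv_mul_eq_one.mp he
    subst this; exact lt_irrefl _ h0
  rcases trich hcont horient hfree (h⁻¹ * g) hne with hp | hm
  · exfalso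
    have h1 := hp 0
    rw [ap_mul] at h1
    have h2 : ap h⁻¹ (ap g 0) ≤ ap h⁻¹ (ap h 0) := mono hcont horient hfree h⁻¹ h0.le
    have h3 : ap h⁻¹ (ap h 0) = 0 := by
      have := ap_inv_self h⁻¹ 0; rwa [inv_inv] at this
    linarith
  · intro x
    have h1 := hm x
    rw [ap_mul] at h1
    have h2 := strict hcont horient hfree h h1
    rwa [ap_inv_self] at h2

lemma arch (f : G) (hf : ∀ x, x < ap f x) (y z : ℝ) : ∃ n : ℕ, z < ap (f ^ n) y := by
  by_contra hc
  push_neg at hc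
  set a : ℕ → ℝ := fun n => ap (f ^ n) y with ha
  have hmono : Monotone a := monotone_nat_of_le_succ fun n => by
    rw [ha]; simp only; rw [ap_pow_succ]; exact (hf _).le
  have hbdd : BddAbove (Set.range a) := ⟨z, by rintro _ ⟨n, rfl⟩; exact hc n⟩
  have h1 : Filter.Tendsto a Filter.atTop (nhds (⨆ n, a n)) := tendsto_atTop_ciSup hmono hbdd
  have h2 : Filter.Tendsto (fun n => ap f (a n)) Filter.atTop (nhds (ap f (⨆ n, a n))) :=
    ((hcont (f : Equiv.Perm ℝ) f.2).tendsto _).comp h1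
  have h3 : Filter.Tendsto (fun n => a (n + 1)) Filter.atTop (nhds (⨆ n, a n)) :=
    h1.comp (Filter.tendsto_add_atTop_nat 1)
  have heq : (fun n => ap f (a n)) = fun n => a (n + 1) :=
    funext fun n => (ap_pow_succ f n y).symm
  rw [heq] at h2
  have hfix : ap f (⨆ n, a n) = ⨆ n, a n := tendsto_nhds_unique h2 h3
  have h4 := free' hcont horient hfree f _ hfix
  have h5 := hf y
  rw [h4, ap_one] at h5
  exact lt_irrefl _ h5

omit hcont horient hfree

lemma ap_pow_le (f : G) (hf : ∀ x, x < ap f x) : ∀ (n : ℕ) (x : ℝ), x ≤ ap (f ^ n) x := by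
  intro n
  induction n with
  | zero => intro x; rw [pow_zero, ap_one]
  | succ n ih => intro x; rw [ap_pow_succ]; exact (ih x).trans (hf _).le

lemma ap_pow_lt (f : G) (hf : ∀ x, x < ap f x) : ∀ (n : ℕ), 1 ≤ n → ∀ x, x < ap (f ^ n) x := by
  rintro (_ | n) hn x
  · omega
  · rw [ap_pow_succ]; exact lt_of_le_of_lt (ap_pow_le f hf n x) (hf _)

lemma ap_zpow_lt (f : G) (hf : ∀ x, x < ap f x) {p q : ℤ} (h : p < q) (x : ℝ) :
    ap (f ^ p) x < ap (f ^ q) x := by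
  have hd : f ^ q = f ^ ((q - p).toNat : ℕ) * f ^ p := by
    rw [← zpow_natCast, Int.toNat_of_nonneg (by omega : (0 : ℤ) ≤ q - p), ← zpow_add,
      sub_add_cancel]
  rw [hd, ap_mul]
  exact ap_pow_lt f hf _ (by omega) _

lemma ap_zpow_le (f : G) (hf : ∀ x, x < ap f x) {p q : ℤ} (h : p ≤ q) (x : ℝ) :
    ap (f ^ p) x ≤ ap (f ^ q) x := by
  rcases eq_or_lt_of_le h with rfl | h
  · exact le_rfl
  · exact (ap_zpow_lt f hf h x).le

include hcont horient hfree

lemma exists_u (f : G) (hf : ∀ x, x < ap f x) (g : G) :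
    ∃ p : ℤ, ap (f ^ p) 0 ≤ ap g 0 ∧ ap g 0 < ap (f ^ (p + 1)) 0 := by
  obtain ⟨m, hm⟩ := arch hcont horient hfree f hf 0 (ap g 0)
  have hbdd : ∃ b : ℤ, ∀ z : ℤ, ap (f ^ z) 0 ≤ ap g 0 → z ≤ b := by
    refine ⟨m, fun z hz => ?_⟩
    by_contra hlt
    push_neg at hlt
    have h1 := ap_zpow_lt f hf (show (m : ℤ) < z from hlt) 0
    rw [zpow_natCast] at h1
    linarith
  have hinh : ∃ z : ℤ, ap (f ^ z) 0 ≤ ap g 0 := by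
    obtain ⟨n, hn⟩ := arch hcont horient hfree f hf (ap g 0) 0
    refine ⟨-(n : ℤ), ?_⟩
    have hkey : ap (f ^ (n : ℤ)) (ap (f ^ (-(n : ℤ))) 0) = 0 := by
      rw [← ap_mul, ← zpow_add, add_neg_cancel, zpow_zero, ap_one]
    have hs := (strict hcont horient hfree (f ^ (n : ℤ))).le_iff_le
      (a := ap (f ^ (-(n : ℤ))) 0) (b := ap g 0)
    apply hs.mp
    rw [hkey, zpow_natCast]
    exact hn.le
  obtain ⟨p, hp1, hp2⟩ := Int.exists_greatest_of_bdd hbdd hinh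
  refine ⟨p, hp1, ?_⟩
  by_contra h
  push_neg at h
  exact absurd (hp2 (p + 1) h) (by omega)

end Basic

section U

variable (hcont : ∀ g ∈ G, Continuous (⇑g))
  (horient : ∀ g ∈ G, Monotone (⇑g))
  (hfree : ∀ g ∈ G, (∃ x : ℝ, g x = x) → g = 1)
  (f : G) (hf : ∀ x, x < ap f x)
  (u : G → ℤ)
  (hu : ∀ g : G, ap (f ^ u g) 0 ≤ ap g 0 ∧ ap g 0 < ap (f ^ (u g + 1)) 0)

include hcont horient hfree hf hu

lemma u_max (g : G) (p : ℤ) (hp : ap (f ^ p) 0 ≤ ap g 0) : p ≤ u g := by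
  by_contra h
  push_neg at h
  have h1 : ap (f ^ (u g + 1)) 0 ≤ ap (f ^ p) 0 := ap_zpow_le f hf (by omega) 0
  have h2 := (hu g).2
  linarith

lemma u_mono (g h : G) (hgh : ap g 0 ≤ ap h 0) : u g ≤ u h :=
  u_max hcont horient hfree f hf u hu h (u g) (le_trans (hu g).1 hgh)

lemma u_quasi (g h : G) :
    u g + u h ≤ u (g * h) ∧ u (g * h) ≤ u g + u h + 1 := by
  constructor
  · apply u_max hcont horient hfree f hf u hu
    rw [zpow_add, ap_mul, ap_mul]
    calc ap (f ^ u g) (ap (f ^ u h) 0) ≤ ap g (ap (f ^ u h) 0) :=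
          ptwise_le hcont horient hfree (f ^ u g) g (hu g).1 _
      _ ≤ ap g (ap h 0) := mono hcont horient hfree g (hu h).1
  · have h2 : ap (g * h) 0 < ap (f ^ (u g + u h + 2)) 0 := by
      have he : u g + u h + 2 = (u g + 1) + (u h + 1) := by ring
      rw [he, zpow_add, ap_mul, ap_mul]
      calc ap g (ap h 0) < ap g (ap (f ^ (u h + 1)) 0) :=
            strict hcont horient hfree g (hu h).2
        _ < ap (f ^ (u g + 1)) (ap (f ^ (u h + 1)) 0) :=
          ptwise_lt hcont horient hfree g (f ^ (u g + 1)) (hu g).2 _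
    by_contra hcon
    push_neg at hcon
    have h3 : ap (f ^ (u g + u h + 2)) 0 ≤ ap (f ^ u (g * h)) 0 :=
      ap_zpow_le f hf (by omega) 0
    have h4 := (hu (g * h)).1
    linarith

lemma u_pow (g : G) : ∀ n : ℕ, 1 ≤ n →
    (n : ℤ) * u g ≤ u (g ^ n) ∧ u (g ^ n) ≤ (n : ℤ) * u g + ((n : ℤ) - 1) := by
  intro n hn
  induction n with
  | zero => omega
  | succ n ih =>
    rcases Nat.eq_zero_or_pos n with rfl | hn'
    · simp
    · obtain ⟨ih1, ih2⟩ := ih hn'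
      have hq := u_quasi hcont horient hfree f hf u hu (g ^ n) g
      rw [← pow_succ] at hq
      push_cast
      push_cast at ih1 ih2
      constructor
      · nlinarith [hq.1]
      · nlinarith [hq.2]

lemma u_cross (g : G) (m n : ℕ) (hm : 1 ≤ m) (hn : 1 ≤ n) :
    (n : ℤ) * u (g ^ m) ≤ (m : ℤ) * (u (g ^ n) + 1) := by
  have h1 := (u_pow hcont horient hfree f hf u hu (g ^ m) n hn).1
  have h2 := (u_pow hcont horient hfree f hf u hu (g ^ n) m hm).2
  have he : (g ^ m) ^ n = (g ^ n) ^ m := by rw [← pow_mul, ← pow_mul, mul_comm]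
  rw [he] at h1
  have hm1 : (1 : ℤ) ≤ (m : ℤ) := by exact_mod_cast hm
  nlinarith

end U

/-- The translation-number-like function. -/
noncomputable def phi0 (u : G → ℤ) (g : G) : ℝ :=
  sSup {x : ℝ | ∃ n : ℕ, 1 ≤ n ∧ x = (u (g ^ n) : ℝ) / n}

lemma eq_of_close (r s : ℝ) (h : ∀ n : ℕ, 1 ≤ n → |(n : ℝ) * r - (n : ℝ) * s| ≤ 3) :
    r = s := by
  by_contra hne
  have hd : 0 < |r - s| := abs_pos.2 (sub_ne_zero.2 hne)
  obtain ⟨n, hn⟩ := exists_nat_gt (3 / |r - s|)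
  have hn0 : (0 : ℝ) < n := lt_trans (by positivity) hn
  have hn1 : 1 ≤ n := by
    by_contra h0
    push_neg at h0
    interval_cases n
    norm_num at hn0
  have h1 := h n hn1
  rw [← mul_sub, abs_mul, abs_of_nonneg (le_of_lt hn0)] at h1
  rw [div_lt_iff₀ hd] at hn
  linarith

section Phi

variable (hcont : ∀ g ∈ G, Continuous (⇑g))
  (horient : ∀ g ∈ G, Monotone (⇑g))
  (hfree : ∀ g ∈ G, (∃ x : ℝ, g x = x) → g = 1)
  (f : G) (hf : ∀ x, x < ap f x)
  (u : G → ℤ)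
  (hu : ∀ g : G, ap (f ^ u g) 0 ≤ ap g 0 ∧ ap g 0 < ap (f ^ (u g + 1)) 0)

include hcont horient hfree hf hu

lemma phi0_char (g : G) (n : ℕ) (hn : 1 ≤ n) :
    (u (g ^ n) : ℝ) ≤ (n : ℝ) * phi0 u g ∧ (n : ℝ) * phi0 u g ≤ (u (g ^ n) : ℝ) + 1 := by
  have hnpos : (0 : ℝ) < (n : ℝ) := by exact_mod_cast hn
  have hbdd : BddAbove {x : ℝ | ∃ m : ℕ, 1 ≤ m ∧ x = (u (g ^ m) : ℝ) / m} := by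
    refine ⟨(u (g ^ 1) : ℝ) + 1, ?_⟩
    rintro x ⟨m, hm, rfl⟩
    have hmpos : (0 : ℝ) < (m : ℝ) := by exact_mod_cast hm
    have hc := u_cross hcont horient hfree f hf u hu g m 1 hm le_rfl
    have hc' : (1 : ℝ) * (u (g ^ m) : ℝ) ≤ (m : ℝ) * ((u (g ^ 1) : ℝ) + 1) := by
      exact_mod_cast hc
    rw [div_le_iff₀ hmpos]
    nlinarith
  have hne : Set.Nonempty {x : ℝ | ∃ m : ℕ, 1 ≤ m ∧ x = (u (g ^ m) : ℝ) / m} :=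
    ⟨(u (g ^ 1) : ℝ), 1, le_rfl, by norm_num⟩
  constructor
  · have hmem : (u (g ^ n) : ℝ) / n ∈ {x : ℝ | ∃ m : ℕ, 1 ≤ m ∧ x = (u (g ^ m) : ℝ) / m} :=
      ⟨n, hn, rfl⟩
    have hle := le_csSup hbdd hmem
    rw [div_le_iff₀ hnpos] at hle
    calc (u (g ^ n) : ℝ) ≤ phi0 u g * n := hle
      _ = (n : ℝ) * phi0 u g := mul_comm _ _
  · have hle : phi0 u g ≤ ((u (g ^ n) : ℝ) + 1) / n := by
      apply csSup_le hne
      rintro x ⟨m, hm, rfl⟩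
      have hmpos : (0 : ℝ) < (m : ℝ) := by exact_mod_cast hm
      rw [div_le_div_iff₀ hmpos hnpos]
      have hc := u_cross hcont horient hfree f hf u hu g m n hm hn
      have hc' : (n : ℝ) * (u (g ^ m) : ℝ) ≤ (m : ℝ) * ((u (g ^ n) : ℝ) + 1) := by
        exact_mod_cast hc
      nlinarith
    rw [le_div_iff₀ hnpos] at hle
    calc (n : ℝ) * phi0 u g = phi0 u g * n := mul_comm _ _
      _ ≤ (u (g ^ n) : ℝ) + 1 := hle

omit hf hu

-- order invariance lemmas
lemma rmul_le (a b c : G) (h : ap a 0 ≤ ap b 0) : ap (a * c) 0 ≤ ap (b * c) 0 := by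
  rw [ap_mul, ap_mul]
  exact ptwise_le hcont horient hfree a b h _

lemma lmul_le (a b c : G) (h : ap a 0 ≤ ap b 0) : ap (c * a) 0 ≤ ap (c * b) 0 := by
  rw [ap_mul, ap_mul]
  exact mono hcont horient hfree c h

lemma powAux (a b : G) (h : ap (a * b) 0 ≤ ap (b * a) 0) :
    ∀ n : ℕ, ap (a ^ n * b) 0 ≤ ap (b * a ^ n) 0 := by
  intro n
  induction n with
  | zero => simp
  | succ n ih =>
    have e1 : a ^ (n + 1) * b = a * (a ^ n * b) := by group
    have e2 : a * (b * a ^ n) = (a * b) * a ^ n := by group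
    have e3 : (b * a) * a ^ n = b * a ^ (n + 1) := by group
    calc ap (a ^ (n + 1) * b) 0 = ap (a * (a ^ n * b)) 0 := by rw [e1]
      _ ≤ ap (a * (b * a ^ n)) 0 := lmul_le hcont horient hfree _ _ a ih
      _ = ap ((a * b) * a ^ n) 0 := by rw [e2]
      _ ≤ ap ((b * a) * a ^ n) 0 := rmul_le hcont horient hfree _ _ _ h
      _ = ap (b * a ^ (n + 1)) 0 := by rw [e3]

lemma pow_mono' (a b : G) (h : ap a 0 ≤ ap b 0) :
    ∀ n : ℕ, ap (a ^ n) 0 ≤ ap (b ^ n) 0 := by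
  intro n
  induction n with
  | zero => simp
  | succ n ih =>
    have e1 : a ^ (n + 1) = a * a ^ n := by group
    have e2 : b ^ (n + 1) = b * b ^ n := by group
    calc ap (a ^ (n + 1)) 0 = ap (a * a ^ n) 0 := by rw [e1]
      _ ≤ ap (a * b ^ n) 0 := lmul_le hcont horient hfree _ _ a ih
      _ ≤ ap (b * b ^ n) 0 := rmul_le hcont horient hfree _ _ _ h
      _ = ap (b ^ (n + 1)) 0 := by rw [← e2]

lemma ineq1 (g h : G) (hle : ap (g * h) 0 ≤ ap (h * g) 0) :
    ∀ n : ℕ, ap (g ^ n * h ^ n) 0 ≤ ap ((g * h) ^ n) 0 := by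
  have hA : ap ((g * h) * h) 0 ≤ ap (h * (g * h)) 0 := by
    have hh := rmul_le hcont horient hfree (g * h) (h * g) h hle
    have e : (h * g) * h = h * (g * h) := by group
    rwa [e] at hh
  intro n
  induction n with
  | zero => simp
  | succ n ih =>
    have e1 : g ^ (n + 1) * h ^ (n + 1) = g * ((g ^ n * h ^ n) * h) := by group
    have e3 : g * (h * (g * h) ^ n) = (g * h) ^ (n + 1) := by group
    calc ap (g ^ (n + 1) * h ^ (n + 1)) 0 = ap (g * ((g ^ n * h ^ n) * h)) 0 := by rw [e1]
      _ ≤ ap (g * ((g * h) ^ n * h)) 0 :=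
        lmul_le hcont horient hfree _ _ g (rmul_le hcont horient hfree _ _ h ih)
      _ ≤ ap (g * (h * (g * h) ^ n)) 0 :=
        lmul_le hcont horient hfree _ _ g (powAux hcont horient hfree (g * h) h hA n)
      _ = ap ((g * h) ^ (n + 1)) 0 := by rw [e3]

lemma ineq3 (g h : G) (hle : ap (g * h) 0 ≤ ap (h * g) 0) :
    ∀ n : ℕ, ap ((h * g) ^ n) 0 ≤ ap (h ^ n * g ^ n) 0 := by
  intro n
  induction n with
  | zero => simp
  | succ n ih =>
    have e1 : (h * g) ^ (n + 1) = (h * g) ^ n * (h * g) := pow_succ _ n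
    have e2 : (h ^ n * g ^ n) * (h * g) = h ^ n * ((g ^ n * h) * g) := by group
    have e3 : h ^ n * ((h * g ^ n) * g) = h ^ (n + 1) * g ^ (n + 1) := by group
    have hpa := powAux hcont horient hfree g h hle n
    calc ap ((h * g) ^ (n + 1)) 0 = ap ((h * g) ^ n * (h * g)) 0 := by rw [e1]
      _ ≤ ap ((h ^ n * g ^ n) * (h * g)) 0 := rmul_le hcont horient hfree _ _ _ ih
      _ = ap (h ^ n * ((g ^ n * h) * g)) 0 := by rw [e2]
      _ ≤ ap (h ^ n * ((h * g ^ n) * g)) 0 :=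
        lmul_le hcont horient hfree _ _ (h ^ n) (rmul_le hcont horient hfree _ _ g hpa)
      _ = ap (h ^ (n + 1) * g ^ (n + 1)) 0 := by rw [e3]

include hf hu

lemma hom_of_le (g h : G) (hle : ap (g * h) 0 ≤ ap (h * g) 0) :
    phi0 u (g * h) = phi0 u g + phi0 u h ∧ phi0 u (h * g) = phi0 u g + phi0 u h := by
  have key : ∀ n : ℕ, 1 ≤ n →
      ((u (g ^ n) + u (h ^ n) : ℤ) ≤ u ((g * h) ^ n) ∧
        u ((g * h) ^ n) ≤ u (g ^ n) + u (h ^ n) + 1) ∧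
      ((u (g ^ n) + u (h ^ n) : ℤ) ≤ u ((h * g) ^ n) ∧
        u ((h * g) ^ n) ≤ u (g ^ n) + u (h ^ n) + 1) := by
    intro n hn
    have i1 := ineq1 hcont horient hfree g h hle n
    have i2 := pow_mono' hcont horient hfree (g * h) (h * g) hle n
    have i3 := ineq3 hcont horient hfree g h hle n
    have q1 := (u_quasi hcont horient hfree f hf u hu (g ^ n) (h ^ n)).1
    have q2 := (u_quasi hcont horient hfree f hf u hu (h ^ n) (g ^ n)).2
    have m1 := u_mono hcont horient hfree f hf u hu _ _ i1
    have m2 := u_mono hcont horient hfree f hf u hu _ _ i2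
    have m3 := u_mono hcont horient hfree f hf u hu _ _ i3
    omega
  have main : ∀ k : G, (∀ n : ℕ, 1 ≤ n →
      ((u (g ^ n) + u (h ^ n) : ℤ) ≤ u (k ^ n) ∧
        u (k ^ n) ≤ u (g ^ n) + u (h ^ n) + 1)) →
      phi0 u k = phi0 u g + phi0 u h := by
    intro k hk
    apply eq_of_close
    intro n hn
    obtain ⟨c1, c2⟩ := phi0_char hcont horient hfree f hf u hu k n hn
    obtain ⟨d1, d2⟩ := phi0_char hcont horient hfree f hf u hu g n hn
    obtain ⟨e1, e2⟩ := phi0_char hcont horient hfree f hf u hu h n hn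
    obtain ⟨k1, k2⟩ := hk n hn
    have k1' : (u (g ^ n) : ℝ) + (u (h ^ n) : ℝ) ≤ (u (k ^ n) : ℝ) := by exact_mod_cast k1
    have k2' : (u (k ^ n) : ℝ) ≤ (u (g ^ n) : ℝ) + (u (h ^ n) : ℝ) + 1 := by exact_mod_cast k2
    have hma : (n : ℝ) * (phi0 u g + phi0 u h) = (n : ℝ) * phi0 u g + (n : ℝ) * phi0 u h :=
      mul_add _ _ _
    rw [abs_le]
    constructor <;> linarith
  exact ⟨main (g * h) fun n hn => (key n hn).1, main (h * g) fun n hn => (key n hn).2⟩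

end Phi

end Holder7

open Holder7 in
/-- Hölder's theorem: a group of orientation-preserving homeomorphisms of the real
line (realized as a subgroup of the permutations of `ℝ` whose elements are continuous
and monotone, hence orientation-preserving homeomorphisms) acting freely embeds in
`(ℝ, +)`; in particular it is abelian. -/
theorem stmt7 (G : Subgroup (Equiv.Perm ℝ))
    (hcont : ∀ g ∈ G, Continuous (⇑g))
    (horient : ∀ g ∈ G, Monotone (⇑g))
    (hfree : ∀ g ∈ G, (∃ x : ℝ, g x = x) → g = 1) :
    (∃ φ : G →* Multiplicative ℝ, Function.Injective φ) ∧
      ∀ g ∈ G, ∀ h ∈ G, g * h = h * g := by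
  classical
  by_cases htriv : ∀ g : G, ap g 0 = 0
  · have hall : ∀ g : G, g = 1 := fun g => free' hcont horient hfree g 0 (htriv g)
    refine ⟨⟨1, fun a b _ => (hall a).trans (hall b).symm⟩, ?_⟩
    intro g hg h hh
    have hg1 : g = 1 := by simpa using congrArg Subtype.val (hall ⟨g, hg⟩)
    have hh1 : h = 1 := by simpa using congrArg Subtype.val (hall ⟨h, hh⟩)
    rw [hg1, hh1]
  · push_neg at htriv
    obtain ⟨f', hf'⟩ := htriv
    have hex : ∃ f : G, ∀ x, x < ap f x := by
      have hne : f' ≠ 1 := fun he => hf' (by rw [he, ap_one])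
      rcases trich hcont horient hfree f' hne with hp | hm
      · exact ⟨f', hp⟩
      · refine ⟨f'⁻¹, fun x => ?_⟩
        have h1 := hm (ap f'⁻¹ x)
        rwa [ap_inv_self] at h1
    obtain ⟨f, hf⟩ := hex
    choose u hu using fun g => exists_u hcont horient hfree f hf g
    have hom : ∀ a b : G, phi0 u (a * b) = phi0 u a + phi0 u b := by
      intro a b
      rcases le_total (ap (a * b) 0) (ap (b * a) 0) with hc | hc
      · exact (hom_of_le hcont horient hfree f hf u hu a b hc).1
      · exact ((hom_of_le hcont horient hfree f hf u hu b a hc).2).trans (add_comm _ _)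
    have hu1 : u 1 = 0 := by
      have h1 := (hu 1).1
      have h2 := (hu 1).2
      rw [ap_one] at h1 h2
      by_contra hne
      rcases lt_or_gt_of_ne hne with hlt | hgt
      · have h3 := ap_zpow_le f hf (show u 1 + 1 ≤ 0 by omega) 0
        rw [zpow_zero, ap_one] at h3
        linarith
      · have h3 := ap_zpow_lt f hf (show (0 : ℤ) < u 1 from hgt) 0
        rw [zpow_zero, ap_one] at h3
        linarith
    have hone : phi0 u 1 = 0 := by
      apply eq_of_close
      intro n hn
      obtain ⟨c1, c2⟩ := phi0_char hcont horient hfree f hf u hu 1 n hn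
      rw [one_pow, hu1] at c1 c2
      push_cast at c1 c2
      rw [abs_le]
      constructor <;> nlinarith
    have hinv : ∀ a : G, phi0 u a⁻¹ = - phi0 u a := by
      intro a
      have h1 := hom a⁻¹ a
      rw [inv_mul_cancel, hone] at h1
      linarith
    have hpos : ∀ a : G, 0 < ap a 0 → 0 < phi0 u a := by
      intro a ha0
      have hane : a ≠ 1 := fun he => by rw [he, ap_one] at ha0; exact lt_irrefl _ ha0
      have ha : ∀ x, x < ap a x := by
        rcases trich hcont horient hfree a hane with hp | hm
        · exact hp
        · exact absurd (hm 0) (by linarith)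
      obtain ⟨n, hn⟩ := arch hcont horient hfree a ha 0 (ap f 0)
      have hn1 : 1 ≤ n := by
        rcases Nat.eq_zero_or_pos n with rfl | h
        · rw [pow_zero, ap_one] at hn; linarith [hf 0]
        · exact h
      have h1 : (1 : ℤ) ≤ u (a ^ n) := by
        apply u_max hcont horient hfree f hf u hu
        rw [zpow_one]
        exact hn.le
      obtain ⟨c1, c2⟩ := phi0_char hcont horient hfree f hf u hu a n hn1
      have h2 : (1 : ℝ) ≤ (n : ℝ) * phi0 u a := le_trans (by exact_mod_cast h1) c1
      have hnpos : (0 : ℝ) < n := by exact_mod_cast hn1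
      nlinarith
    have hzero : ∀ a : G, phi0 u a = 0 → a = 1 := by
      intro a haz
      by_contra hne
      rcases trich hcont horient hfree a hne with hp | hm
      · exact absurd haz (hpos a (hp 0)).ne'
      · have hi : 0 < ap a⁻¹ 0 := by
          have h1 := hm (ap a⁻¹ 0)
          rwa [ap_inv_self] at h1
        have h2 := hpos a⁻¹ hi
        rw [hinv a, haz] at h2
        norm_num at h2
    refine ⟨⟨{ toFun := fun g => Multiplicative.ofAdd (phi0 u g),
               map_one' := by
                 show Multiplicative.ofAdd (phi0 u 1) = 1
                 rw [hone]; rfl,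
               map_mul' := fun a b => by
                 show Multiplicative.ofAdd (phi0 u (a * b)) =
                   Multiplicative.ofAdd (phi0 u a) * Multiplicative.ofAdd (phi0 u b)
                 rw [hom a b]; rfl }, ?_⟩, ?_⟩
    · intro a b hab
      have h1 : phi0 u a = phi0 u b := by
        have h2 := congrArg Multiplicative.toAdd hab
        simpa using h2
      have h2 : phi0 u (a * b⁻¹) = 0 := by rw [hom, hinv, h1]; ring
      exact mul_inv_eq_one.mp (hzero _ h2)
    · intro g hg h hh
      set a : G := ⟨g, hg⟩
      set b : G := ⟨h, hh⟩
      have h2 : phi0 u ((a * b) * (b * a)⁻¹) = 0 := by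
        rw [hom, hinv, hom, hom]; ring
      have hcomm : a * b = b * a := mul_inv_eq_one.mp (hzero _ h2)
      exact congrArg Subtype.val hcomm
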